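/- Let X₁, ..., X_n be independent random variables and S_k = X₁ + ... + X_k. Then for every ε > 0, P(max_{1≤k≤n} |S_k| ≥ 3ε) ≤ 3 max_{1≤k≤n} P(|S_k| ≥ ε). -/

import Mathlib

open MeasureTheory ProbabilityTheory

/-- Etemadi's maximal inequality: for independent `X₁,…,Xₙ` and partial
sums `S_k`, `P(max_{1≤k≤n} |S_k| ≥ 3ε) ≤ 3 max_{1≤k≤n} P(|S_k| ≥ ε)`. -/
theorem stmt_12 {Ω : Type*} [MeasurableSpace Ω] (P : Measure Ω) [IsProbabilityMeasure P]
    (n : ℕ) (X : ℕ → Ω → ℝ) (hmeas : ∀ i, Measurable (X i))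
    (hindep : iIndepFun X P)
    (ε : ℝ) (hε : 0 < ε) :
    P {ω | ∃ k ∈ Finset.Icc 1 n, 3 * ε ≤ |∑ i ∈ Finset.range k, X i ω|}
      ≤ 3 * (Finset.Icc 1 n).sup (fun k => P {ω | ε ≤ |∑ i ∈ Finset.range k, X i ω|}) := by
  rcases Nat.eq_zero_or_pos n with hn | hn
  · subst hn
    simp
  set S : ℕ → Ω → ℝ := fun k ω => ∑ i ∈ Finset.range k, X i ω with hS
  have hSmeas : ∀ k, Measurable (S k) := fun k =>
    Finset.measurable_sum _ fun i _ => hmeas i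
  set M : ENNReal := (Finset.Icc 1 n).sup (fun k => P {ω | ε ≤ |S k ω|}) with hM
  have hMle : ∀ k ∈ Finset.Icc 1 n, P {ω | ε ≤ |S k ω|} ≤ M := fun k hk =>
    Finset.le_sup (f := fun k => P {ω | ε ≤ |S k ω|}) hk
  have hnmem : n ∈ Finset.Icc 1 n := Finset.mem_Icc.2 ⟨hn, le_rfl⟩
  -- the first-entrance events
  set B : ℕ → Set Ω := fun k =>
    {ω | 3 * ε ≤ |S k ω| ∧ ∀ j ∈ Finset.Icc 1 (k - 1), |S j ω| < 3 * ε} with hB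
  have hBmeas : ∀ k, MeasurableSet (B k) := by
    intro k
    have hBeq : B k = {ω | 3 * ε ≤ |S k ω|} ∩
        ⋂ j ∈ Finset.Icc 1 (k - 1), {ω | |S j ω| < 3 * ε} := by
      ext ω
      simp [hB, Set.mem_iInter]
    rw [hBeq]
    exact (measurableSet_le measurable_const (hSmeas k).abs).inter
      (MeasurableSet.biInter (Set.to_countable _) fun j _ =>
        measurableSet_lt (hSmeas j).abs measurable_const)
  -- the target set is the disjoint union of the B k
  have hA : {ω | ∃ k ∈ Finset.Icc 1 n, 3 * ε ≤ |S k ω|} = ⋃ k ∈ Finset.Icc 1 n, B k := by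
    ext ω
    simp only [Set.mem_setOf_eq, Set.mem_iUnion, exists_prop]
    constructor
    · rintro ⟨k, hk, h3⟩
      have hex : ∃ m, m ∈ Finset.Icc 1 n ∧ 3 * ε ≤ |S m ω| := ⟨k, hk, h3⟩
      classical
      set k₀ := Nat.find hex with hk₀
      obtain ⟨hk₀mem, hk₀3⟩ := Nat.find_spec hex
      refine ⟨k₀, hk₀mem, hk₀3, fun j hj => ?_⟩
      rw [Finset.mem_Icc] at hj hk₀mem
      have hjlt : j < k₀ := by omega
      have := Nat.find_min hex hjlt
      push_neg at this
      exact this (Finset.mem_Icc.2 ⟨hj.1, by omega⟩)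
    · rintro ⟨k, hk, h3, -⟩
      exact ⟨k, hk, h3⟩
  have hdisj : (Finset.Icc 1 n : Set ℕ).PairwiseDisjoint B := by
    have key : ∀ a b : ℕ, 1 ≤ a → a < b → Disjoint (B a) (B b) := by
      intro a b ha1 h
      refine Set.disjoint_left.2 fun ω hωa hωb => ?_
      have := hωb.2 a (Finset.mem_Icc.2 ⟨ha1, by omega⟩)
      exact absurd hωa.1 (not_le.2 this)
    intro a ha b hb hab
    simp only [Finset.coe_Icc, Set.mem_Icc] at ha hb
    rcases lt_or_gt_of_ne hab with h | h
    · exact key a b ha.1 h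
    · exact (key b a hb.1 h).symm
  -- events for the splitting
  set C : Set Ω := {ω | ε ≤ |S n ω|} with hC
  have hCmeas : MeasurableSet C := measurableSet_le measurable_const (hSmeas n).abs
  set D : ℕ → Set Ω := fun k => {ω | 2 * ε ≤ |S n ω - S k ω|} with hD
  -- `B k \ C ⊆ D k`
  have hBD : ∀ k, B k \ C ⊆ B k ∩ D k := by
    intro k ω hω
    refine ⟨hω.1, ?_⟩
    have h1 : 3 * ε ≤ |S k ω| := hω.1.1
    have h2 : ¬ ε ≤ |S n ω| := hω.2
    have : |S k ω| - |S n ω| ≤ |S n ω - S k ω| := by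
      have := abs_sub_abs_le_abs_sub (S k ω) (S n ω)
      rw [abs_sub_comm] at this
      linarith
    simp only [hD, Set.mem_setOf_eq]
    push_neg at h2
    linarith
  -- independence: `P (B k ∩ D k) = P (B k) * P (D k)`
  have hindepBD : ∀ k ∈ Finset.Icc 1 n, P (B k ∩ D k) = P (B k) * P (D k) := by
    intro k hk
    rw [Finset.mem_Icc] at hk
    classical
    have hdST : Disjoint (Finset.range k) (Finset.Ico k n) := by
      simp only [Finset.disjoint_left, Finset.mem_range, Finset.mem_Ico]
      omega
    have hIF := hindep.indepFun_finset (Finset.range k) (Finset.Ico k n) hdST hmeas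
    rw [indepFun_iff_measure_inter_preimage_eq_mul] at hIF
    -- partial sums as functions of the first tuple
    set g : ℕ → (↥(Finset.range k) → ℝ) → ℝ := fun j v =>
      ∑ i ∈ (Finset.range k).attach, if (i : ℕ) < j then v i else 0 with hg
    have hgmeas : ∀ j, Measurable (g j) := fun j =>
      Finset.measurable_sum _ fun i _ => by
        split_ifs with h
        · exact measurable_pi_apply i
        · exact measurable_const
    have hgval : ∀ j ≤ k, ∀ ω, g j (fun i : (Finset.range k : Finset ℕ) => X i ω) = S j ω := by
      intro j hj ω
      rw [hg]
      simp only
      rw [Finset.sum_attach (Finset.range k) (fun i => if i < j then X i ω else 0),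
        ← Finset.sum_filter]
      have : (Finset.range k).filter (· < j) = Finset.range j := by
        ext i; simp only [Finset.mem_filter, Finset.mem_range]; omega
      rw [this]
    set E : Set (↥(Finset.range k) → ℝ) :=
      {v | 3 * ε ≤ |g k v| ∧ ∀ j ∈ Finset.Icc 1 (k - 1), |g j v| < 3 * ε} with hE
    have hEmeas : MeasurableSet E := by
      have hEeq : E = {v | 3 * ε ≤ |g k v|} ∩
          ⋂ j ∈ Finset.Icc 1 (k - 1), {v | |g j v| < 3 * ε} := by
        ext v
        simp [hE, Set.mem_iInter]
      rw [hEeq]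
      exact (measurableSet_le measurable_const (hgmeas k).abs).inter
        (MeasurableSet.biInter (Set.to_countable _) fun j _ =>
          measurableSet_lt (hgmeas j).abs measurable_const)
    have hBE : B k = (fun ω (i : (Finset.range k : Finset ℕ)) => X i ω) ⁻¹' E := by
      ext ω
      simp only [hB, hE, Set.mem_preimage, Set.mem_setOf_eq]
      rw [hgval k le_rfl ω]
      refine and_congr_right fun _ => ?_
      refine forall₂_congr fun j hj => ?_
      rw [Finset.mem_Icc] at hj
      rw [hgval j (by omega) ω]
    set F : Set (↥(Finset.Ico k n) → ℝ) :=
      {w | 2 * ε ≤ |∑ i ∈ (Finset.Ico k n).attach, w i|} with hF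
    have hFmeas : MeasurableSet F :=
      measurableSet_le measurable_const
        (Finset.measurable_sum _ fun i _ => measurable_pi_apply i).abs
    have hDF : D k = (fun ω (i : (Finset.Ico k n : Finset ℕ)) => X i ω) ⁻¹' F := by
      ext ω
      simp only [hD, hF, Set.mem_preimage, Set.mem_setOf_eq]
      rw [Finset.sum_attach (Finset.Ico k n) (fun i => X i ω)]
      have : S n ω - S k ω = ∑ i ∈ Finset.Ico k n, X i ω := by
        rw [hS]
        simp only
        rw [← Finset.sum_range_add_sum_Ico _ hk.2]
        ring
      rw [this]
    rw [hBE, hDF]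
    exact hIF E F hEmeas hFmeas
  -- `P (D k) ≤ 2 * M`
  have hDle : ∀ k ∈ Finset.Icc 1 n, P (D k) ≤ 2 * M := by
    intro k hk
    have hsub : D k ⊆ C ∪ {ω | ε ≤ |S k ω|} := by
      intro ω hω
      simp only [hD, Set.mem_setOf_eq] at hω
      by_contra h
      simp only [hC, Set.mem_union, Set.mem_setOf_eq, not_or, not_le] at h
      have := abs_sub (S n ω) (S k ω)
      linarith [abs_sub_abs_le_abs_sub (S n ω) (S k ω), abs_sub_abs_le_abs_sub (S k ω) (S n ω),
        abs_sub_comm (S n ω) (S k ω) ▸ (abs_sub (S n ω) (S k ω))]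
    calc P (D k) ≤ P (C ∪ {ω | ε ≤ |S k ω|}) := measure_mono hsub
      _ ≤ P C + P {ω | ε ≤ |S k ω|} := measure_union_le _ _
      _ ≤ M + M := add_le_add (hMle n hnmem) (hMle k hk)
      _ = 2 * M := (two_mul M).symm
  -- main computation
  rw [hA, measure_biUnion_finset hdisj fun k _ => hBmeas k]
  have hsumB : ∑ k ∈ Finset.Icc 1 n, P (B k) ≤ 1 := by
    rw [← measure_biUnion_finset hdisj fun k _ => hBmeas k]
    exact prob_le_one
  have key : ∀ k ∈ Finset.Icc 1 n, P (B k) ≤ P (B k ∩ C) + P (B k) * (2 * M) := by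
    intro k hk
    calc P (B k) = P (B k ∩ C) + P (B k \ C) := (measure_inter_add_diff _ hCmeas).symm
      _ ≤ P (B k ∩ C) + P (B k ∩ D k) := add_le_add le_rfl (measure_mono (hBD k))
      _ = P (B k ∩ C) + P (B k) * P (D k) := by rw [hindepBD k hk]
      _ ≤ P (B k ∩ C) + P (B k) * (2 * M) :=
          add_le_add le_rfl (mul_le_mul' le_rfl (hDle k hk))
  calc ∑ k ∈ Finset.Icc 1 n, P (B k)
      ≤ ∑ k ∈ Finset.Icc 1 n, (P (B k ∩ C) + P (B k) * (2 * M)) := Finset.sum_le_sum key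
    _ = (∑ k ∈ Finset.Icc 1 n, P (B k ∩ C)) + (∑ k ∈ Finset.Icc 1 n, P (B k)) * (2 * M) := by
        rw [Finset.sum_add_distrib, Finset.sum_mul]
    _ ≤ P C + 1 * (2 * M) := by
        refine add_le_add ?_ (mul_le_mul' hsumB le_rfl)
        rw [← measure_biUnion_finset (hdisj.mono_on fun k _ => Set.inter_subset_left)
          fun k _ => (hBmeas k).inter hCmeas]
        · exact measure_mono (Set.iUnion₂_subset fun k _ => Set.inter_subset_right)
    _ ≤ M + 2 * M := by rw [one_mul]; exact add_le_add (hMle n hnmem) le_rfl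
    _ = 3 * M := by ring
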